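/- Let ψ be twice continuously differentiable on [-τ, +∞) with τ > 0, with ψ'' decreasing on [-τ,+∞). Define c(z) = ψ''(-τ) if z = -τ, and c(z) = 2(ψ(-τ) - ψ(z) + ψ'(z)(z+τ))/(z+τ)² otherwise, and assume c(z) > 0 for all z ≥ -τ. Then for all x, z ∈ [-τ, +∞): ψ(x) ≤ ψ(z) + ψ'(z)(x - z) + (c(z)/2)(x - z)². -/

import Mathlib

/-- Quadratic majorization (Erdogan–Fessler curvature): if `ψ` is twice continuously
differentiable on `[-τ,∞)` with `ψ''` decreasing there, and the curvature `c` is positive,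
then `ψ(x) ≤ ψ(z) + ψ'(z)(x-z) + (c(z)/2)(x-z)²` for all `x, z ∈ [-τ,∞)`. -/
theorem stmt5 (τ : ℝ) (hτ : 0 < τ) (ψ : ℝ → ℝ)
    (hψ : ContDiffOn ℝ 2 ψ (Set.Ici (-τ)))
    (hdec : AntitoneOn (deriv (deriv ψ)) (Set.Ici (-τ)))
    (c : ℝ → ℝ)
    (hc : ∀ z ∈ Set.Ici (-τ),
      c z = if z = -τ then deriv (deriv ψ) (-τ)
        else 2 * (ψ (-τ) - ψ z + deriv ψ z * (z + τ)) / (z + τ) ^ 2)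
    (hcpos : ∀ z ∈ Set.Ici (-τ), 0 < c z)
    (x z : ℝ) (hx : x ∈ Set.Ici (-τ)) (hz : z ∈ Set.Ici (-τ)) :
    ψ x ≤ ψ z + deriv ψ z * (x - z) + c z / 2 * (x - z) ^ 2 := by
  have hU : UniqueDiffOn ℝ (Set.Ici (-τ)) := uniqueDiffOn_Ici _
  set φ : ℝ → ℝ := derivWithin ψ (Set.Ici (-τ)) with hφdef
  have hφ1 : ContDiffOn ℝ 1 φ (Set.Ici (-τ)) := hψ.derivWithin hU (by norm_num)
  have hφc : ContinuousOn φ (Set.Ici (-τ)) := hφ1.continuousOn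
  have hψc : ContinuousOn ψ (Set.Ici (-τ)) := hψ.continuousOn
  have hmem : ∀ t : ℝ, -τ < t → Set.Ici (-τ) ∈ nhds t := fun t ht => Ici_mem_nhds ht
  have heq : ∀ t : ℝ, -τ < t → deriv ψ t = φ t := fun t ht =>
    (derivWithin_of_mem_nhds (hmem t ht)).symm
  have hψderiv : ∀ t : ℝ, -τ < t → HasDerivAt ψ (φ t) t := by
    intro t ht
    have h1 : DifferentiableAt ℝ ψ t :=
      ((hψ.differentiableOn (by norm_num) t (le_of_lt ht)).differentiableAt (hmem t ht))
    have := h1.hasDerivAt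
    rwa [heq t ht] at this
  have hφdiff : ∀ t : ℝ, -τ < t → DifferentiableAt ℝ φ t := fun t ht =>
    (hφ1.differentiableOn (by norm_num) t (le_of_lt ht)).differentiableAt (hmem t ht)
  have hd2 : ∀ t : ℝ, -τ < t → deriv φ t = deriv (deriv ψ) t := by
    intro t ht
    apply Filter.EventuallyEq.deriv_eq
    filter_upwards [Ioi_mem_nhds ht] with y hy
    exact (heq y hy).symm
  have hc0 : 0 < c z := hcpos z hz
  set c0 : ℝ := c z with hc0def
  set g : ℝ → ℝ := fun t => ψ z + φ z * (t - z) + c0 / 2 * (t - z) ^ 2 - ψ t with hgdef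
  set G : ℝ → ℝ := fun t => φ z + c0 * (t - z) - φ t with hGdef
  have hgz : g z = 0 := by simp [hgdef]
  have hGz : G z = 0 := by simp [hGdef]
  have hgc : ContinuousOn g (Set.Ici (-τ)) := by
    apply ContinuousOn.sub _ hψc
    exact (Continuous.continuousOn (by fun_prop))
  have hgderiv : ∀ t : ℝ, -τ < t → HasDerivAt g (G t) t := by
    intro t ht
    have hid : HasDerivAt (fun u : ℝ => u - z) 1 t := (hasDerivAt_id t).sub_const z
    have hsq : HasDerivAt (fun u : ℝ => (u - z) ^ 2) (2 * (t - z) ^ 1 * 1) t := hid.pow 2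
    have h1 := ((hasDerivAt_const t (ψ z)).add (hid.const_mul (φ z))).add
      (hsq.const_mul (c0 / 2))
    have h2 := h1.sub (hψderiv t ht)
    refine h2.congr_deriv ?_
    simp only [hGdef]; ring
  have hGc : ContinuousOn G (Set.Ici (-τ)) := by
    apply ContinuousOn.sub _ hφc
    exact (Continuous.continuousOn (by fun_prop))
  have hGderiv : ∀ t : ℝ, -τ < t → HasDerivAt G (c0 - deriv (deriv ψ) t) t := by
    intro t ht
    have hφt : HasDerivAt φ (deriv φ t) t := (hφdiff t ht).hasDerivAt
    have hlin : HasDerivAt (fun u : ℝ => φ z + c0 * (u - z)) c0 t := by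
      simpa using ((hasDerivAt_id t).sub_const z).const_mul c0
    have h3 := hlin.sub hφt
    rw [hd2 t ht] at h3
    exact h3
  have gmono : ∀ a b : ℝ, -τ ≤ a → (∀ t ∈ Set.Ioo a b, 0 ≤ G t) →
      MonotoneOn g (Set.Icc a b) := by
    intro a b ha hG
    have hsub : Set.Icc a b ⊆ Set.Ici (-τ) := fun t htt => le_trans ha htt.1
    apply monotoneOn_of_deriv_nonneg (convex_Icc a b) (hgc.mono hsub)
    · rw [interior_Icc]
      intro t htt
      exact ((hgderiv t (lt_of_le_of_lt ha htt.1)).differentiableAt).differentiableWithinAt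
    · rw [interior_Icc]
      intro t htt
      rw [(hgderiv t (lt_of_le_of_lt ha htt.1)).deriv]
      exact hG t htt
  have ganti : ∀ a b : ℝ, -τ ≤ a → (∀ t ∈ Set.Ioo a b, G t ≤ 0) →
      AntitoneOn g (Set.Icc a b) := by
    intro a b ha hG
    have hsub : Set.Icc a b ⊆ Set.Ici (-τ) := fun t htt => le_trans ha htt.1
    apply antitoneOn_of_deriv_nonpos (convex_Icc a b) (hgc.mono hsub)
    · rw [interior_Icc]
      intro t htt
      exact ((hgderiv t (lt_of_le_of_lt ha htt.1)).differentiableAt).differentiableWithinAt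
    · rw [interior_Icc]
      intro t htt
      rw [(hgderiv t (lt_of_le_of_lt ha htt.1)).deriv]
      exact hG t htt
  rcases eq_or_lt_of_le (Set.mem_Ici.mp hz) with hzeq | hzlt
  · -- z = -τ
    have hcz : c0 = deriv (deriv ψ) (-τ) := by rw [hc0def, hc z hz, if_pos hzeq.symm]
    -- identify deriv ψ z with φ z
    have hdd : DifferentiableAt ℝ (deriv ψ) (-τ) := by
      by_contra h
      have h0 := deriv_zero_of_not_differentiableAt h
      have h1 := hcpos (-τ) Set.self_mem_Ici
      rw [hc (-τ) Set.self_mem_Ici, if_pos rfl, h0] at h1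
      exact lt_irrefl 0 h1
    have hDz : deriv ψ z = φ z := by
      rw [← hzeq]
      have h1 : Filter.Tendsto (deriv ψ) (nhdsWithin (-τ) (Set.Ioi (-τ)))
          (nhds (deriv ψ (-τ))) := hdd.continuousAt.continuousWithinAt
      have h2 : Filter.Tendsto φ (nhdsWithin (-τ) (Set.Ioi (-τ))) (nhds (φ (-τ))) :=
        (hφc (-τ) Set.self_mem_Ici).mono_left (nhdsWithin_mono _ Set.Ioi_subset_Ici_self)
      have h3 : Filter.Tendsto (deriv ψ) (nhdsWithin (-τ) (Set.Ioi (-τ)))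
          (nhds (φ (-τ))) := by
        apply Filter.Tendsto.congr' _ h2
        filter_upwards [self_mem_nhdsWithin] with y hy
        exact (heq y hy).symm
      exact tendsto_nhds_unique h1 h3
    have hGnonneg : ∀ t ∈ Set.Ici (-τ), 0 ≤ G t := by
      have hmono : MonotoneOn G (Set.Ici (-τ)) := by
        apply monotoneOn_of_deriv_nonneg (convex_Ici _) hGc
        · rw [interior_Ici]
          intro t ht
          exact ((hGderiv t ht).differentiableAt).differentiableWithinAt
        · rw [interior_Ici]
          intro t ht
          rw [(hGderiv t ht).deriv]
          have := hdec (le_refl (-τ)) (Set.mem_Ici.mpr (le_of_lt ht)) (le_of_lt ht)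
          rw [← hcz] at this
          linarith
      intro t ht
      have hzt : z ≤ t := hzeq ▸ ht
      have := hmono hz ht hzt
      rw [hGz] at this
      -- this : 0 ≤ G t? no: G z ≤ G t with G z = 0
      exact this
    have hmono := gmono (-τ) x le_rfl (fun t htt => hGnonneg t (le_of_lt htt.1))
    have hfin := hmono (Set.left_mem_Icc.mpr hx) (Set.right_mem_Icc.mpr hx) hx
    have hgτ0 : g (-τ) = 0 := by rw [hzeq]; exact hgz
    rw [hDz, ← sub_nonneg]
    show (0:ℝ) ≤ g x
    linarith
  · -- z > -τ
    have hzne : z ≠ -τ := ne_of_gt hzlt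
    have hzτ : (0:ℝ) < z + τ := by linarith
    have hcz : c0 * (z + τ) ^ 2 = 2 * (ψ (-τ) - ψ z + φ z * (z + τ)) := by
      have h1 : c0 = 2 * (ψ (-τ) - ψ z + φ z * (z + τ)) / (z + τ) ^ 2 := by
        rw [hc0def, hc z hz, if_neg hzne, heq z hzlt]
      rw [h1]
      field_simp
    have hDz : deriv ψ z = φ z := heq z hzlt
    have hgτ : g (-τ) = 0 := by
      show ψ z + φ z * (-τ - z) + c0 / 2 * (-τ - z) ^ 2 - ψ (-τ) = 0
      linear_combination hcz / 2
    have hGconv : ConvexOn ℝ (Set.Ici (-τ)) G := by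
      apply MonotoneOn.convexOn_of_deriv (convex_Ici _) hGc
      · rw [interior_Ici]
        intro t ht
        exact ((hGderiv t ht).differentiableAt).differentiableWithinAt
      · rw [interior_Ici]
        intro a ha b hb hab
        rw [(hGderiv a ha).deriv, (hGderiv b hb).deriv]
        have := hdec (Set.mem_Ici.mpr (le_of_lt ha)) (Set.mem_Ici.mpr (le_of_lt hb)) hab
        linarith
    obtain ⟨ξ, hξ, hξ0⟩ := exists_deriv_eq_zero hzlt
      (hgc.mono (fun t htt => htt.1 : Set.Icc (-τ) z ⊆ Set.Ici (-τ)))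
      (by rw [hgτ, hgz])
    have hGξ : G ξ = 0 := by rw [← (hgderiv ξ hξ.1).deriv]; exact hξ0
    have hξs : ξ ∈ Set.Ici (-τ) := le_of_lt hξ.1
    have hGpos_right : ∀ t, z < t → 0 ≤ G t := by
      intro t htz
      have hts : t ∈ Set.Ici (-τ) := le_of_lt (lt_trans hzlt htz)
      have hs := hGconv.slope_mono_adjacent hξs hts hξ.2 htz
      rw [hGξ, hGz] at hs
      have hs' : (0:ℝ) ≤ G t / (t - z) := by simpa using hs
      rcases div_nonneg_iff.mp hs' with ⟨h, _⟩ | ⟨_, h⟩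
      · exact h
      · linarith
    have hGneg_mid : ∀ t, ξ < t → t < z → G t ≤ 0 := by
      intro t hξt htz
      have hts : t ∈ Set.Ici (-τ) := le_of_lt (lt_trans hξ.1 hξt)
      have hs := hGconv.slope_mono_adjacent hξs hz hξt htz
      rw [hGξ, hGz] at hs
      rw [div_le_div_iff₀ (by linarith) (by linarith [hξ.1, hξ.2])] at hs
      nlinarith [hs, hξ.1, hξ.2]
    have hGpos_left : ∀ t, -τ ≤ t → t < ξ → 0 ≤ G t := by
      intro t hts hξt
      have hs := hGconv.slope_mono_adjacent hts hz hξt hξ.2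
      rw [hGξ, hGz] at hs
      rw [div_le_div_iff₀ (by linarith) (by linarith [hξ.1, hξ.2])] at hs
      nlinarith [hs, hξ.1, hξ.2]
    rw [hDz, ← sub_nonneg]
    show (0:ℝ) ≤ g x
    rcases lt_or_ge x ξ with hxξ | hξx
    · have hmono := gmono (-τ) x le_rfl
        (fun t htt => hGpos_left t (le_of_lt htt.1) (lt_trans htt.2 hxξ))
      have hfin := hmono (Set.left_mem_Icc.mpr hx) (Set.right_mem_Icc.mpr hx) hx
      linarith
    · rcases le_or_gt x z with hxz | hzx
      · have hanti := ganti ξ z hξs (fun t htt => hGneg_mid t htt.1 htt.2)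
        have hfin := hanti (Set.mem_Icc.mpr ⟨hξx, hxz⟩)
          (Set.right_mem_Icc.mpr (le_of_lt hξ.2)) hxz
        linarith
      · have hmono := gmono z x (le_of_lt hzlt) (fun t htt => hGpos_right t htt.1)
        have hfin := hmono (Set.left_mem_Icc.mpr (le_of_lt hzx))
          (Set.right_mem_Icc.mpr (le_of_lt hzx)) (le_of_lt hzx)
        linarith
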